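/- For each τ > 0 there exists a constant C(τ) > 0 such that for every standard complex Gaussian ζ, every integer n ≥ 1, and every real t with |t| ≥ τ, E[ |log|1 + ζ/t||^n ] ≤ C(τ) · n!. -/

import Mathlib

set_option maxHeartbeats 1000000
open MeasureTheory Real Metric Set

lemma gauss_int {c : ℝ} (hc : 0 < c) :
    Integrable (fun z : ℂ => Real.exp (-(c * ‖z‖ ^ 2))) := by
  have h1 : Integrable (fun p : ℝ × ℝ => Real.exp (-c * p.1 ^ 2) * Real.exp (-c * p.2 ^ 2)) :=
    (integrable_exp_neg_mul_sq hc).mul_prod (integrable_exp_neg_mul_sq hc)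
  have h2 := (Complex.volume_preserving_equiv_real_prod.symm).integrable_comp_emb
    Complex.measurableEquivRealProd.symm.measurableEmbedding
    (g := fun z : ℂ => Real.exp (-(c * ‖z‖ ^ 2)))
  rw [← h2]
  apply h1.congr
  filter_upwards with p
  simp only [Function.comp_apply]
  rw [← Real.exp_add]
  congr 1
  have : ‖Complex.measurableEquivRealProd.symm p‖ ^ 2 = p.1 ^ 2 + p.2 ^ 2 := by
    rw [Complex.sq_norm]
    simp [Complex.measurableEquivRealProd, Complex.normSq_apply]
    ring
  rw [this]; ring


lemma Kint (R : ℝ) : IntegrableOn (fun w : ℂ => ‖w‖⁻¹) (closedBall 0 R) := by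
  rcases le_or_gt R 0 with hR | hR
  · -- closedBall has measure ≤ measure of {0} or empty; just bound set in cB 0 0 etc.
    rcases lt_or_eq_of_le hR with h | h
    · simp [Metric.closedBall_eq_empty.2 h, IntegrableOn]
    · subst h
      simp only [Metric.closedBall_zero]
      exact (integrableOn_singleton_iff (by simp)).2 (Or.inl (by simp))
  · constructor
    · exact ((measurable_norm.inv).aestronglyMeasurable)
    · -- finite integral
      rw [hasFiniteIntegral_iff_norm]
      have hnorm : ∀ w : ℂ, ENNReal.ofReal ‖(‖w‖⁻¹)‖ = ENNReal.ofReal (‖w‖⁻¹) := by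
        intro w; rw [Real.norm_eq_abs, abs_of_nonneg (by positivity)]
      simp only [hnorm]
      set D : ℕ → Set ℂ := fun k => (closedBall 0 (R * 2⁻¹ ^ k) \ closedBall 0 (R * 2⁻¹ ^ (k+1))) ∪ {0}
      have hsub : closedBall (0:ℂ) R ⊆ ⋃ k, D k := by
        intro w hw
        rcases eq_or_ne w 0 with h0 | h0
        · exact Set.mem_iUnion.2 ⟨0, Or.inr (by simp [h0])⟩
        · have hwn : 0 < ‖w‖ := norm_pos_iff.2 h0
          have hwR : ‖w‖ ≤ R := by simpa [mem_closedBall, dist_zero_right] using hw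
          obtain ⟨n, hn⟩ : ∃ n : ℕ, R * 2⁻¹ ^ n < ‖w‖ := by
            obtain ⟨n, hn⟩ := exists_pow_lt_of_lt_one (div_pos hwn hR) (by norm_num : (2:ℝ)⁻¹ < 1)
            exact ⟨n, by rw [mul_comm]; exact (lt_div_iff₀ hR).1 hn⟩
          have hex : ∃ n, R * 2⁻¹ ^ n < ‖w‖ := ⟨n, hn⟩
          classical
          set k := Nat.find hex with hk
          have hklt : R * 2⁻¹ ^ k < ‖w‖ := Nat.find_spec hex
          have hkpos : k ≠ 0 := by
            intro h
            rw [h] at hklt; simp only [pow_zero, mul_one] at hklt; linarith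
          obtain ⟨m, hm⟩ := Nat.exists_eq_succ_of_ne_zero hkpos
          have hle : ‖w‖ ≤ R * 2⁻¹ ^ m := by
            by_contra hc
            push_neg at hc
            exact Nat.find_min hex (by omega : m < k) hc
          refine Set.mem_iUnion.2 ⟨m, Or.inl ⟨by simpa [mem_closedBall, dist_zero_right] using hle, ?_⟩⟩
          simp only [mem_closedBall, dist_zero_right, not_le]
          rw [show m + 1 = k by omega]; exact hklt
      calc ∫⁻ w in closedBall (0:ℂ) R, ENNReal.ofReal (‖w‖⁻¹)
          ≤ ∫⁻ w in ⋃ k, D k, ENNReal.ofReal (‖w‖⁻¹) := by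
            apply lintegral_mono_set hsub
        _ ≤ ∑' k, ∫⁻ w in D k, ENNReal.ofReal (‖w‖⁻¹) := lintegral_iUnion_le _ _
        _ ≤ ∑' k : ℕ, ENNReal.ofReal (2 * R) * ENNReal.ofReal 2⁻¹ ^ k
              * volume (ball (0:ℂ) 1) := by
            apply ENNReal.tsum_le_tsum
            intro k
            have hmeasD : ∫⁻ w in D k, ENNReal.ofReal (‖w‖⁻¹)
                ≤ ENNReal.ofReal (2^(k+1) / R) * volume (D k) := by
              rw [← setLIntegral_const]
              apply setLIntegral_mono (by fun_prop)
              intro w hw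
              rcases hw with hw | hw
              · have h1 : R * 2⁻¹ ^ (k+1) < ‖w‖ := by
                  have := hw.2
                  simpa [mem_closedBall, dist_zero_right, not_le] using this
                have hpos : (0:ℝ) < R * 2⁻¹ ^ (k+1) := by positivity
                have : ‖w‖⁻¹ ≤ 2^(k+1) / R := by
                  rw [div_eq_mul_inv]
                  have := inv_anti₀ hpos h1.le
                  calc ‖w‖⁻¹ ≤ (R * 2⁻¹ ^ (k+1))⁻¹ := this
                    _ = 2^(k+1) * R⁻¹ := by
                        rw [mul_inv]
                        rw [← inv_pow, inv_inv]
                        ring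
                  
                exact ENNReal.ofReal_le_ofReal this
              · simp only [Set.mem_singleton_iff] at hw
                subst hw
                simp
            have hvol : volume (D k) ≤ ENNReal.ofReal ((R * 2⁻¹ ^ k)^2) * volume (ball (0:ℂ) 1) := by
              have : D k ⊆ closedBall 0 (R * 2⁻¹ ^ k) := by
                intro w hw
                rcases hw with hw | hw
                · exact hw.1
                · simp only [Set.mem_singleton_iff] at hw; subst hw
                  simp [mem_closedBall]; positivity
              calc volume (D k) ≤ volume (closedBall (0:ℂ) (R * 2⁻¹ ^ k)) := measure_mono this
                _ = ENNReal.ofReal ((R * 2⁻¹ ^ k) ^ Module.finrank ℝ ℂ) * volume (ball (0:ℂ) 1) :=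
                    Measure.addHaar_closedBall _ _ (by positivity)
                _ = ENNReal.ofReal ((R * 2⁻¹ ^ k)^2) * volume (ball (0:ℂ) 1) := by
                    rw [Complex.finrank_real_complex]
            calc ∫⁻ w in D k, ENNReal.ofReal (‖w‖⁻¹)
                ≤ ENNReal.ofReal (2^(k+1) / R) * (ENNReal.ofReal ((R * 2⁻¹ ^ k)^2) * volume (ball (0:ℂ) 1)) := by
                  refine hmeasD.trans ?_
                  exact mul_le_mul_right hvol _
              _ = ENNReal.ofReal (2 * R) * ENNReal.ofReal 2⁻¹ ^ k * volume (ball (0:ℂ) 1) := by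
                  rw [← mul_assoc, ← ENNReal.ofReal_pow (by norm_num), ← ENNReal.ofReal_mul (by positivity),
                    ← ENNReal.ofReal_mul (by positivity)]
                  congr 2
                  field_simp
                  rw [pow_succ, mul_comm, ← mul_assoc, ← mul_pow]; norm_num
        _ < ⊤ := by
            rw [ENNReal.tsum_mul_right, ENNReal.tsum_mul_left, ENNReal.tsum_geometric]
            have h1 : ENNReal.ofReal 2⁻¹ < 1 := by
              rw [← ENNReal.ofReal_one]
              exact (ENNReal.ofReal_lt_ofReal_iff_of_nonneg (by norm_num)).2 (by norm_num)
            have h2 : (1 - ENNReal.ofReal 2⁻¹)⁻¹ ≠ ⊤ := by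
              rw [Ne, ENNReal.inv_eq_top, tsub_eq_zero_iff_le]
              exact not_le.2 h1
            exact ENNReal.mul_lt_top
              (ENNReal.mul_lt_top ENNReal.ofReal_lt_top (lt_top_iff_ne_top.2 h2))
              measure_ball_lt_top


lemma Kbound (R : ℝ) :
    ∫ w in closedBall (0:ℂ) R, ‖w‖⁻¹ ≤ (∫ w in closedBall (0:ℂ) 1, ‖w‖⁻¹)
      + R ^ 2 * (volume (ball (0:ℂ) 1)).toReal := by
  have hpt : ∀ w : ℂ, ‖w‖⁻¹ ≤ (closedBall (0:ℂ) 1).indicator (fun w => ‖w‖⁻¹) w + 1 := by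
    intro w
    by_cases hw : w ∈ closedBall (0:ℂ) 1
    · rw [Set.indicator_of_mem hw]; linarith
    · rw [Set.indicator_of_notMem hw]
      have : 1 < ‖w‖ := by simpa [mem_closedBall, dist_zero_right, not_le] using hw
      have h1 : ‖w‖⁻¹ ≤ 1 := by
        rw [inv_le_one_iff₀]; right; linarith
      linarith
  have hind : Integrable ((closedBall (0:ℂ) 1).indicator (fun w => ‖w‖⁻¹)) :=
    (integrable_indicator_iff measurableSet_closedBall).2 (Kint 1)
  calc ∫ w in closedBall (0:ℂ) R, ‖w‖⁻¹
      ≤ ∫ w in closedBall (0:ℂ) R,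
          ((closedBall (0:ℂ) 1).indicator (fun w => ‖w‖⁻¹) w + 1) := by
        refine setIntegral_mono_on (Kint R) ?_ measurableSet_closedBall (fun w _ => hpt w)
        exact (hind.integrableOn).add (integrableOn_const measure_closedBall_lt_top.ne)
    _ = (∫ w in closedBall (0:ℂ) R, (closedBall (0:ℂ) 1).indicator (fun w => ‖w‖⁻¹) w)
          + (volume (closedBall (0:ℂ) R)).toReal := by
        rw [integral_add hind.integrableOn
          (integrableOn_const measure_closedBall_lt_top.ne)]
        simp [Measure.real]
    _ ≤ (∫ w in closedBall (0:ℂ) 1, ‖w‖⁻¹) + R ^ 2 * (volume (ball (0:ℂ) 1)).toReal := by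
        gcongr ?_ + ?_
        · calc ∫ w in closedBall (0:ℂ) R, (closedBall (0:ℂ) 1).indicator (fun w => ‖w‖⁻¹) w
              ≤ ∫ w : ℂ, (closedBall (0:ℂ) 1).indicator (fun w => ‖w‖⁻¹) w :=
                setIntegral_le_integral hind (Filter.Eventually.of_forall fun w =>
                  Set.indicator_nonneg (fun w _ => by positivity) w)
            _ = ∫ w in closedBall (0:ℂ) 1, ‖w‖⁻¹ := integral_indicator measurableSet_closedBall
        · rcases le_or_gt 0 R with hR | hR
          · rw [Measure.addHaar_closedBall _ _ hR, Complex.finrank_real_complex,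
              ENNReal.toReal_mul, ENNReal.toReal_ofReal (by positivity)]
          · rw [Metric.closedBall_eq_empty.2 hR]
            simp
            positivity

lemma S1 (s : ℝ) (hs : 0 ≤ s) : s * Real.exp (-(s ^ 2 / 4)) ≤ 2 := by
  rw [Real.exp_neg]
  rw [mul_inv_le_iff₀ (Real.exp_pos _)]
  nlinarith [Real.add_one_le_exp (s ^ 2 / 4), sq_nonneg (s - 2)]

lemma S2 (s : ℝ) (hs : 0 ≤ s) : s ^ 3 * Real.exp (-(s ^ 2 / 4)) ≤ 32 := by
  rw [Real.exp_neg, mul_inv_le_iff₀ (Real.exp_pos _)]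
  have h := Real.quadratic_le_exp_of_nonneg (x := s ^ 2 / 4) (by positivity)
  nlinarith [sq_nonneg (s - 2), sq_nonneg s, sq_nonneg (s ^ 2 - 4 * s), sq_nonneg (s ^ 2 - 8)]

lemma norm_mul_exp_le (s : ℝ) (hs : 0 ≤ s) :
    s * Real.exp (-(s ^ 2)) ≤ Real.exp (-(2⁻¹ * s ^ 2)) := by
  have h1 : s ≤ Real.exp (2⁻¹ * s ^ 2) := by
    nlinarith [Real.add_one_le_exp (2⁻¹ * s ^ 2), sq_nonneg (s - 1)]
  calc s * Real.exp (-(s ^ 2)) ≤ Real.exp (2⁻¹ * s ^ 2) * Real.exp (-(s ^ 2)) :=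
        mul_le_mul_of_nonneg_right h1 (Real.exp_nonneg _)
    _ = Real.exp (-(2⁻¹ * s ^ 2)) := by rw [← Real.exp_add]; ring_nf

/-- For each τ > 0 there is C(τ) > 0 such that for all integers n ≥ 1 and |t| ≥ τ,
`E[|log|1 + ζ/t||^n] ≤ C(τ) n!` for a standard complex Gaussian ζ. -/
theorem hole_prob_stmt_5 (τ : ℝ) (hτ : 0 < τ) :
    ∃ C > (0 : ℝ), ∀ (n : ℕ), 1 ≤ n → ∀ (t : ℝ), τ ≤ |t| →
      (∫ z : ℂ, |Real.log ‖1 + z / (t : ℂ)‖| ^ n * ((1 / π) * Real.exp (-‖z‖ ^ 2)))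
        ≤ C * (Nat.factorial n : ℝ) := by
  set A : ℝ := ∫ z : ℂ, Real.exp (-‖z‖ ^ 2) with hA
  set A2 : ℝ := ∫ z : ℂ, Real.exp (-(2⁻¹ * ‖z‖ ^ 2)) with hA2
  set I1 : ℝ := ∫ w in closedBall (0:ℂ) 1, ‖w‖⁻¹ with hI1
  set V : ℝ := (volume (ball (0:ℂ) 1)).toReal with hV
  have hg2 : Integrable (fun z : ℂ => Real.exp (-‖z‖ ^ 2)) := by
    have := gauss_int one_pos; simpa using this
  have hg2' : Integrable (fun z : ℂ => Real.exp (-(2⁻¹ * ‖z‖ ^ 2))) := gauss_int (by norm_num)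
  have hA0 : 0 ≤ A := integral_nonneg (fun z => (Real.exp_nonneg _))
  have hA20 : 0 ≤ A2 := integral_nonneg (fun z => (Real.exp_nonneg _))
  have hI10 : 0 ≤ I1 := setIntegral_nonneg measurableSet_closedBall (fun w _ => by positivity)
  have hV0 : 0 ≤ V := ENNReal.toReal_nonneg
  have hπ : (0:ℝ) < π := Real.pi_pos
  refine ⟨(1/π) * (A + (1/τ) * A2) + (1/π) * A + (1/π) * (2 * I1 + 8 * V) + 1, by positivity,
    fun n hn t ht => ?_⟩
  have ht0 : (0:ℝ) < |t| := lt_of_lt_of_le hτ ht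
  have htne : (t:ℂ) ≠ 0 := by
    simp only [ne_eq, Complex.ofReal_eq_zero]
    intro h; rw [h] at ht0; simp at ht0
  set r : ℝ := |t| / 2 with hr
  set S : Set ℂ := closedBall (-(t:ℂ)) r with hS
  have hnormt : ‖(t:ℂ)‖ = |t| := by rw [Complex.norm_real, Real.norm_eq_abs]
  have hx : ∀ z : ℂ, ‖1 + z / (t:ℂ)‖ = ‖z + t‖ / |t| := by
    intro z
    rw [show (1 : ℂ) + z / t = (z + t) / t by field_simp; ring, norm_div, hnormt]
  have hmemS : ∀ z : ℂ, z ∈ S ↔ ‖z + t‖ ≤ r := by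
    intro z
    rw [hS, mem_closedBall, dist_eq_norm, sub_neg_eq_add]
  -- the three comparison functions
  set g1 : ℂ → ℝ := fun z => ‖1 + z / (t:ℂ)‖ * Real.exp (-‖z‖ ^ 2) with hg1def
  set g3 : ℂ → ℝ := fun z => |t| * ‖z + t‖⁻¹ * Real.exp (-‖z‖ ^ 2) with hg3def
  set G : ℂ → ℝ := fun z => Real.exp (-‖z‖ ^ 2) + (1/τ) * Real.exp (-(2⁻¹ * ‖z‖ ^ 2)) with hGdef
  have hGint : Integrable G := hg2.add (hg2'.const_mul _)
  have hg1le : ∀ z : ℂ, g1 z ≤ G z := by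
    intro z
    have h1 : ‖1 + z / (t:ℂ)‖ ≤ 1 + (1/τ) * ‖z‖ := by
      calc ‖1 + z / (t:ℂ)‖ ≤ ‖(1:ℂ)‖ + ‖z / (t:ℂ)‖ := norm_add_le _ _
        _ = 1 + ‖z‖ / |t| := by rw [norm_one, norm_div, hnormt]
        _ ≤ 1 + (1/τ) * ‖z‖ := by
            rw [show (1/τ) * ‖z‖ = ‖z‖ / τ from by ring]
            gcongr
    have h2 : ‖z‖ * Real.exp (-‖z‖ ^ 2) ≤ Real.exp (-(2⁻¹ * ‖z‖ ^ 2)) :=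
      norm_mul_exp_le ‖z‖ (norm_nonneg z)
    calc g1 z ≤ (1 + (1/τ) * ‖z‖) * Real.exp (-‖z‖ ^ 2) :=
          mul_le_mul_of_nonneg_right h1 (Real.exp_nonneg _)
      _ = Real.exp (-‖z‖ ^ 2) + (1/τ) * (‖z‖ * Real.exp (-‖z‖ ^ 2)) := by ring
      _ ≤ G z := by
          rw [hGdef]
          have : (1/τ) * (‖z‖ * Real.exp (-‖z‖ ^ 2)) ≤ (1/τ) * Real.exp (-(2⁻¹ * ‖z‖ ^ 2)) := by
            apply mul_le_mul_of_nonneg_left h2 (by positivity)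
          simp only []
          linarith
  have hg1cont : Continuous g1 := by
    apply Continuous.mul
    · exact (continuous_const.add (continuous_id.div_const _)).norm
    · exact Real.continuous_exp.comp ((continuous_norm.pow 2).neg)
  have hg1 : Integrable g1 := by
    apply hGint.mono hg1cont.aestronglyMeasurable
    filter_upwards with z
    rw [Real.norm_eq_abs, Real.norm_eq_abs, abs_of_nonneg (by positivity : 0 ≤ g1 z),
      abs_of_nonneg]
    · exact hg1le z
    · have := hg1le z
      have h0 : 0 ≤ g1 z := by positivity
      linarith
  -- translation-based integrability for the singular piece
  have htransl : IntegrableOn (fun z : ℂ => ‖z + (t:ℂ)‖⁻¹) S := by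
    have h := Kint r
    have h' : Integrable ((closedBall (0:ℂ) r).indicator (fun w => ‖w‖⁻¹)) :=
      (integrable_indicator_iff measurableSet_closedBall).2 h
    have h'' : Integrable (fun z : ℂ =>
        (closedBall (0:ℂ) r).indicator (fun w => ‖w‖⁻¹) (z + t)) := h'.comp_add_right _
    have heq : (fun z : ℂ => (closedBall (0:ℂ) r).indicator (fun w => ‖w‖⁻¹) (z + t))
        = S.indicator (fun z => ‖z + (t:ℂ)‖⁻¹) := by
      funext z
      by_cases hz : z ∈ S
      · rw [Set.indicator_of_mem hz, Set.indicator_of_mem]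
        simpa [mem_closedBall, dist_zero_right] using (hmemS z).1 hz
      · rw [Set.indicator_of_notMem hz, Set.indicator_of_notMem]
        intro hc
        apply hz
        rw [hmemS]
        simpa [mem_closedBall, dist_zero_right] using hc
    rw [heq] at h''
    exact (integrable_indicator_iff measurableSet_closedBall).1 h''
  have hg3meas : AEStronglyMeasurable g3 volume := by
    apply Measurable.aestronglyMeasurable
    apply Measurable.mul
    · exact (measurable_const.mul ((measurable_id.add_const _).norm.inv))
    · exact (Real.measurable_exp.comp ((measurable_norm.pow_const 2).neg))
  have hg3 : IntegrableOn g3 S := by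
    apply ((htransl.const_mul |t|).mono' (hg3meas.restrict))
    filter_upwards with z
    rw [Real.norm_eq_abs, abs_of_nonneg (by positivity : (0:ℝ) ≤ g3 z)]
    calc g3 z ≤ |t| * ‖z + t‖⁻¹ * 1 := by
          apply mul_le_mul_of_nonneg_left _ (by positivity)
          exact Real.exp_le_one_iff.2 (neg_nonpos.2 (by positivity))
      _ = |t| * ‖z + t‖⁻¹ := by ring
  have hg3ind : Integrable (S.indicator g3) :=
    (integrable_indicator_iff measurableSet_closedBall).2 hg3
  set Nf : ℝ := (Nat.factorial n : ℝ) with hNf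
  have hNf1 : (1:ℝ) ≤ Nf := by
    rw [hNf]; exact_mod_cast Nat.one_le_iff_ne_zero.2 (Nat.factorial_ne_zero n)
  set H : ℂ → ℝ := fun z => (Nf * (1/π)) * g1 z + (1/π) * Real.exp (-‖z‖ ^ 2)
      + (Nf * (1/π)) * S.indicator g3 z with hHdef
  have hH : Integrable H := ((hg1.const_mul _).add (hg2.const_mul _)).add (hg3ind.const_mul _)
  have hfH : ∀ z : ℂ, |Real.log ‖1 + z / (t:ℂ)‖| ^ n * ((1/π) * Real.exp (-‖z‖ ^ 2)) ≤ H z := by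
    intro z
    have hind3 : S.indicator g3 z
        = (S.indicator (fun z => |t| * ‖z + (t:ℂ)‖⁻¹) z) * Real.exp (-‖z‖ ^ 2) := by
      by_cases hz : z ∈ S
      · rw [Set.indicator_of_mem hz, Set.indicator_of_mem hz]
      · rw [Set.indicator_of_notMem hz, Set.indicator_of_notMem hz, zero_mul]
    have hind0 : 0 ≤ S.indicator (fun z => |t| * ‖z + (t:ℂ)‖⁻¹) z :=
      Set.indicator_nonneg (fun w _ => by positivity) z
    have hbr : |Real.log ‖1 + z / (t:ℂ)‖| ^ n ≤ Nf * ‖1 + z / (t:ℂ)‖ + 1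
        + Nf * S.indicator (fun z => |t| * ‖z + (t:ℂ)‖⁻¹) z := by
      have hxq : ‖1 + z / (t:ℂ)‖ = ‖z + t‖ / |t| := hx z
      obtain ⟨x, hxdef⟩ : ∃ x, ‖1 + z / (t:ℂ)‖ = x := ⟨_, rfl⟩
      rw [hxdef] at hxq ⊢
      have hx0 : 0 ≤ x := hxdef ▸ norm_nonneg _
      rcases eq_or_lt_of_le hx0 with h0 | hxpos
      · rw [← h0, Real.log_zero, abs_zero, zero_pow (by omega : n ≠ 0)]
        nlinarith [hind0, hNf1]
      rcases le_or_gt 1 x with hx1 | hx1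
      · have hthis := Real.pow_div_factorial_le_exp (Real.log x) (Real.log_nonneg hx1) n
        rw [Real.exp_log (by linarith)] at hthis
        rw [div_le_iff₀ (by positivity : (0:ℝ) < Nf)] at hthis
        rw [abs_of_nonneg (Real.log_nonneg hx1)]
        nlinarith [hind0, hNf1, mul_nonneg (by linarith : (0:ℝ) ≤ Nf) hind0]
      rcases le_or_gt (1/2 : ℝ) x with hx2 | hx2
      · have hlabs : |Real.log x| ≤ 1 := by
          rw [abs_of_nonpos (Real.log_nonpos hx0 hx1.le), ← Real.log_inv]
          have h2x : x⁻¹ ≤ 2 := by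
            rw [show (2:ℝ) = ((2:ℝ)⁻¹)⁻¹ by norm_num]
            exact inv_anti₀ (by norm_num) (by linarith)
          calc Real.log x⁻¹ ≤ Real.log 2 := Real.log_le_log (by positivity) h2x
            _ ≤ 2 - 1 := Real.log_le_sub_one_of_pos (by norm_num)
            _ = 1 := by norm_num
        have hp1 : |Real.log x| ^ n ≤ 1 := pow_le_one₀ (abs_nonneg _) hlabs
        linarith [hp1, mul_nonneg (by linarith : (0:ℝ) ≤ Nf) hind0,
          mul_nonneg (by linarith : (0:ℝ) ≤ Nf) hxpos.le]
      · -- x < 1/2 : singular region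
        have hzS : z ∈ S := by
          rw [hmemS]
          have h5 : ‖z + (t:ℂ)‖ = x * |t| := by
            rw [hxq]; field_simp
          rw [hr, h5]; nlinarith [ht0]
        have hindval : S.indicator (fun z => |t| * ‖z + (t:ℂ)‖⁻¹) z = x⁻¹ := by
          rw [Set.indicator_of_mem hzS, hxq, inv_div, div_eq_mul_inv]
        have hx1' : 1 ≤ x⁻¹ := by
          rw [le_inv_comm₀ (by norm_num) hxpos]; linarith
        have hthis := Real.pow_div_factorial_le_exp (Real.log x⁻¹)
          (Real.log_nonneg hx1') n
        rw [Real.exp_log (by positivity)] at hthis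
        rw [div_le_iff₀ (by positivity : (0:ℝ) < Nf)] at hthis
        have hlabs : |Real.log x| = Real.log x⁻¹ := by
          rw [Real.log_inv, abs_of_nonpos (Real.log_nonpos hx0 (by linarith))]
        rw [hlabs, hindval]
        linarith [hthis, mul_nonneg (by linarith : (0:ℝ) ≤ Nf) hxpos.le]
    calc |Real.log ‖1 + z / (t:ℂ)‖| ^ n * ((1/π) * Real.exp (-‖z‖ ^ 2))
        ≤ (Nf * ‖1 + z / (t:ℂ)‖ + 1
            + Nf * S.indicator (fun z => |t| * ‖z + (t:ℂ)‖⁻¹) z)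
            * ((1/π) * Real.exp (-‖z‖ ^ 2)) :=
          mul_le_mul_of_nonneg_right hbr (by positivity)
      _ = H z := by
          rw [hHdef]
          simp only [hg1def]
          rw [hind3]
          ring
  have hmain : (∫ z : ℂ, |Real.log ‖1 + z / (t:ℂ)‖| ^ n * ((1/π) * Real.exp (-‖z‖ ^ 2)))
      ≤ ∫ z : ℂ, H z :=
    integral_mono_of_nonneg (Filter.Eventually.of_forall (fun z => by positivity)) hH
      (Filter.Eventually.of_forall hfH)
  have hsplit : ∫ z : ℂ, H z = (Nf * (1/π)) * (∫ z : ℂ, g1 z) + (1/π) * A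
      + (Nf * (1/π)) * (∫ z : ℂ, S.indicator g3 z) := by
    have i1 : Integrable (fun z : ℂ => Nf * (1/π) * g1 z) := hg1.const_mul _
    have i2 : Integrable (fun z : ℂ => 1/π * Real.exp (-‖z‖ ^ 2)) := hg2.const_mul _
    have i3 : Integrable (fun z : ℂ => Nf * (1/π) * S.indicator g3 z) := hg3ind.const_mul _
    have e1 : ∫ z : ℂ, H z = (∫ z : ℂ, (Nf * (1/π) * g1 z + 1/π * Real.exp (-‖z‖ ^ 2)))
        + ∫ z : ℂ, Nf * (1/π) * S.indicator g3 z := integral_add (i1.add i2) i3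
    have e2 : ∫ z : ℂ, (Nf * (1/π) * g1 z + 1/π * Real.exp (-‖z‖ ^ 2))
        = (∫ z : ℂ, Nf * (1/π) * g1 z) + ∫ z : ℂ, 1/π * Real.exp (-‖z‖ ^ 2) :=
      integral_add i1 i2
    rw [e1, e2, integral_const_mul, integral_const_mul, integral_const_mul]
  have hIg1 : ∫ z : ℂ, g1 z ≤ A + (1/τ) * A2 := by
    calc ∫ z : ℂ, g1 z ≤ ∫ z : ℂ, G z := integral_mono hg1 hGint hg1le
      _ = A + (1/τ) * A2 := by
          have e3 : ∫ z : ℂ, G z = (∫ z : ℂ, Real.exp (-‖z‖ ^ 2))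
              + ∫ z : ℂ, (1/τ) * Real.exp (-(2⁻¹ * ‖z‖ ^ 2)) :=
            integral_add hg2 (hg2'.const_mul _)
          rw [e3, integral_const_mul]
  have hIg3 : ∫ z : ℂ, S.indicator g3 z ≤ 2 * I1 + 8 * V := by
    rw [integral_indicator measurableSet_closedBall]
    have hstepA : ∫ z in S, g3 z
        ≤ ∫ z in S, (|t| * Real.exp (-(|t| ^ 2 / 4))) * ‖z + (t:ℂ)‖⁻¹ := by
      apply setIntegral_mono_on hg3 (htransl.const_mul _) measurableSet_closedBall
      intro z hz
      have h1 : ‖z + (t:ℂ)‖ ≤ r := (hmemS z).1 hz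
      have h2 : |t| / 2 ≤ ‖z‖ := by
        have h3 := norm_sub_norm_le ((t:ℂ)) (z + (t:ℂ))
        have h4 : (t:ℂ) - (z + (t:ℂ)) = -z := by ring
        rw [h4, norm_neg, hnormt] at h3
        rw [hr] at h1
        linarith
      have hexp : Real.exp (-‖z‖ ^ 2) ≤ Real.exp (-(|t| ^ 2 / 4)) := by
        apply Real.exp_le_exp.2
        nlinarith [abs_nonneg t]
      calc g3 z = (|t| * ‖z + (t:ℂ)‖⁻¹) * Real.exp (-‖z‖ ^ 2) := rfl
        _ ≤ (|t| * ‖z + (t:ℂ)‖⁻¹) * Real.exp (-(|t| ^ 2 / 4)) :=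
            mul_le_mul_of_nonneg_left hexp (by positivity)
        _ = (|t| * Real.exp (-(|t| ^ 2 / 4))) * ‖z + (t:ℂ)‖⁻¹ := by ring
    have hstepC : ∫ z in S, ‖z + (t:ℂ)‖⁻¹ = ∫ w in closedBall (0:ℂ) r, ‖w‖⁻¹ := by
      rw [← integral_indicator measurableSet_closedBall,
        ← integral_indicator measurableSet_closedBall,
        ← integral_add_right_eq_self ((closedBall (0:ℂ) r).indicator (fun w => ‖w‖⁻¹)) (t:ℂ)]
      congr 1
      funext z
      by_cases hz : z ∈ S
      · rw [Set.indicator_of_mem (show z + (t:ℂ) ∈ closedBall (0:ℂ) r by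
            rw [mem_closedBall, dist_zero_right]; exact (hmemS z).1 hz),
          Set.indicator_of_mem hz]
      · rw [Set.indicator_of_notMem hz, Set.indicator_of_notMem]
        intro hc
        rw [mem_closedBall, dist_zero_right] at hc
        exact hz ((hmemS z).2 hc)
    calc ∫ z in S, g3 z
        ≤ (|t| * Real.exp (-(|t| ^ 2 / 4))) * ∫ z in S, ‖z + (t:ℂ)‖⁻¹ := by
          rw [← integral_const_mul]; exact hstepA
      _ ≤ (|t| * Real.exp (-(|t| ^ 2 / 4))) * (I1 + r ^ 2 * V) := by
          apply mul_le_mul_of_nonneg_left _ (by positivity)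
          rw [hstepC]; exact Kbound r
      _ ≤ 2 * I1 + 8 * V := by
          have hb1 := S1 |t| (abs_nonneg t)
          have hb2 := S2 |t| (abs_nonneg t)
          have hE : 0 ≤ Real.exp (-(|t| ^ 2 / 4)) := Real.exp_nonneg _
          rw [hr]
          nlinarith [mul_nonneg (sub_nonneg.2 hb1) hI10, mul_nonneg (sub_nonneg.2 hb2) hV0]
  calc (∫ z : ℂ, |Real.log ‖1 + z / (t:ℂ)‖| ^ n * ((1/π) * Real.exp (-‖z‖ ^ 2)))
      ≤ ∫ z : ℂ, H z := hmain
    _ = (Nf * (1/π)) * (∫ z : ℂ, g1 z) + (1/π) * A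
        + (Nf * (1/π)) * (∫ z : ℂ, S.indicator g3 z) := hsplit
    _ ≤ (Nf * (1/π)) * (A + (1/τ) * A2) + (1/π) * A + (Nf * (1/π)) * (2 * I1 + 8 * V) := by
        have hc : (0:ℝ) ≤ Nf * (1/π) := by positivity
        gcongr
    _ ≤ ((1/π) * (A + (1/τ) * A2) + (1/π) * A + (1/π) * (2 * I1 + 8 * V) + 1) * Nf := by
        have h1 : 0 ≤ (1/π) * A := by positivity
        nlinarith [mul_nonneg h1 (sub_nonneg.2 hNf1)]
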